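/- Let (ℝ^k, δ) be a sublinear semidiversity and P the orthogonal projection onto null(δ)^⊥. Then δ(A) = δ(P(A)) for all finite A ⊆ ℝ^k, where P(A) = {P(a) : a ∈ A}. -/

import Mathlib

open Pointwise
open scoped Classical

theorem stmt_11 {k : ℕ} (δ : Finset (EuclideanSpace ℝ (Fin k)) → ℝ)
    (hnn : ∀ A, 0 ≤ δ A)
    (hzero : ∀ A : Finset (EuclideanSpace ℝ (Fin k)), A.card ≤ 1 → δ A = 0)
    (hmono : ∀ A B : Finset (EuclideanSpace ℝ (Fin k)), A ⊆ B → δ A ≤ δ B)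
    (hhom : ∀ (A : Finset (EuclideanSpace ℝ (Fin k))) (lam : ℝ), A.Nonempty → 0 ≤ lam →
      δ (lam • A) = lam * δ A)
    (hsub : ∀ A B : Finset (EuclideanSpace ℝ (Fin k)), A.Nonempty → B.Nonempty →
      δ (A + B) ≤ δ A + δ B)
    (N : Submodule ℝ (EuclideanSpace ℝ (Fin k)))
    (hN : (N : Set (EuclideanSpace ℝ (Fin k))) = {x | δ {0, x} = 0}) :
    ∀ A : Finset (EuclideanSpace ℝ (Fin k)),
      δ (A.image (fun a => (Submodule.orthogonalProjectionOnto Nᗮ a : EuclideanSpace ℝ (Fin k)))) = δ A := by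
  have key : ∀ Q : Finset (EuclideanSpace ℝ (Fin k)),
      (∀ q ∈ Q, δ {0, q} = 0) → δ (insert 0 Q) = 0 := by
    intro Q
    induction Q using Finset.induction_on with
    | empty => intro _; exact hzero {0} (by simp)
    | @insert q Q hq ih =>
      intro hall
      have hsubset : insert 0 (insert q Q) ⊆ ({0, q} : Finset _) + insert 0 Q := by
        intro x hx
        simp only [Finset.mem_insert] at hx
        rcases hx with rfl | rfl | hx
        · have := Finset.add_mem_add (Finset.mem_insert_self (0 : EuclideanSpace ℝ (Fin k)) {q})
            (Finset.mem_insert_self (0 : EuclideanSpace ℝ (Fin k)) Q)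
          simpa using this
        · have := Finset.add_mem_add (show x ∈ ({0, x} : Finset _) by simp)
            (Finset.mem_insert_self (0 : EuclideanSpace ℝ (Fin k)) Q)
          simpa using this
        · have := Finset.add_mem_add (Finset.mem_insert_self (0 : EuclideanSpace ℝ (Fin k)) {q})
            (Finset.mem_insert_of_mem (b := (0 : EuclideanSpace ℝ (Fin k))) hx)
          simpa using this
      have h1 : δ (insert 0 (insert q Q)) ≤ δ ({0, q} : Finset _) + δ (insert 0 Q) :=
        le_trans (hmono _ _ hsubset) (hsub _ _ (by simp) (by simp [Finset.insert_nonempty]))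
      have h2 : δ ({0, q} : Finset _) = 0 := hall q (Finset.mem_insert_self q Q)
      have h3 : δ (insert 0 Q) = 0 := ih (fun x hx => hall x (Finset.mem_insert_of_mem hx))
      have := hnn (insert 0 (insert q Q))
      linarith
  have nullzero : ∀ Q : Finset (EuclideanSpace ℝ (Fin k)),
      (∀ q ∈ Q, q ∈ N) → δ Q = 0 := by
    intro Q hQ
    have hall : ∀ q ∈ Q, δ {0, q} = 0 := by
      intro q hq
      have : q ∈ ({x | δ {0, x} = 0} : Set (EuclideanSpace ℝ (Fin k))) := hN ▸ hQ q hq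
      exact this
    have h1 : δ Q ≤ δ (insert 0 Q) := hmono _ _ (Finset.subset_insert _ _)
    have h2 := key Q hall
    have := hnn Q
    linarith
  intro A
  by_cases hA : A.Nonempty
  · set P : EuclideanSpace ℝ (Fin k) → EuclideanSpace ℝ (Fin k) :=
      fun a => (Submodule.orthogonalProjectionOnto Nᗮ a : EuclideanSpace ℝ (Fin k)) with hP
    have hsubN : ∀ a, a - P a ∈ N := by
      intro a
      have h : a - P a ∈ Nᗮᗮ := Submodule.sub_starProjection_mem_orthogonal (K := Nᗮ) a
      rwa [Submodule.orthogonal_orthogonal] at h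
    set Q1 : Finset (EuclideanSpace ℝ (Fin k)) := A.image (fun a => a - P a) with hQ1def
    set Q2 : Finset (EuclideanSpace ℝ (Fin k)) := A.image (fun a => P a - a) with hQ2def
    have hQ1 : δ Q1 = 0 := by
      apply nullzero
      intro q hq
      obtain ⟨a, _, rfl⟩ := Finset.mem_image.mp hq
      exact hsubN a
    have hQ2 : δ Q2 = 0 := by
      apply nullzero
      intro q hq
      obtain ⟨a, _, rfl⟩ := Finset.mem_image.mp hq
      have : -(a - P a) ∈ N := N.neg_mem (hsubN a)
      simpa using this
    have hA1 : A ⊆ A.image P + Q1 := by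
      intro x hx
      have h := Finset.add_mem_add (Finset.mem_image_of_mem P hx)
        (Finset.mem_image_of_mem (fun a => a - P a) hx)
      have hx' : P x + (x - P x) = x := by abel
      rwa [hx'] at h
    have hA2 : A.image P ⊆ A + Q2 := by
      intro x hx
      obtain ⟨a, ha, rfl⟩ := Finset.mem_image.mp hx
      have h := Finset.add_mem_add ha (Finset.mem_image_of_mem (fun a => P a - a) ha)
      have hx' : a + (P a - a) = P a := by abel
      rwa [hx'] at h
    have ne1 : (A.image P).Nonempty := hA.image P
    have ne2 : Q1.Nonempty := hA.image _
    have ne3 : Q2.Nonempty := hA.image _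
    have l1 : δ A ≤ δ (A.image P) + δ Q1 := le_trans (hmono _ _ hA1) (hsub _ _ ne1 ne2)
    have l2 : δ (A.image P) ≤ δ A + δ Q2 := le_trans (hmono _ _ hA2) (hsub _ _ hA ne3)
    linarith
  · rw [Finset.not_nonempty_iff_eq_empty] at hA
    subst hA
    simp
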